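/- Let P be a g-regular (K1,F1,Z1,S1) placement delivery array, where g = K1(F1−Z1)/S1 is an integer with g ≥ 2 and every row of P contains the same number of stars (Condition 2). For each s ∈ [1:S1], let (j_{s,1},k_{s,1}),…,(j_{s,g},k_{s,g}) be the g cells of P that contain s, ordered so that k_{s,1} < k_{s,2} < … < k_{s,g}. Define the (g−1)F1 × K1 array P1 by: P1(j,k) = * if P(<j>_{F1},k) = *; and if P(<j>_{F1},k) = s with (<j>_{F1},k) = (j_{s,η},k_{s,η}) and i = ⌈j/F1⌉, then P1(j,k) = g(s−1) + <η+i−1>_g. Then P1 is a (g−1)-regular (K1,(g−1)F1,(g−1)Z1,g·S1) placement delivery array satisfying Condition 1 with parameter λ = g−1. -/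

import Mathlib

/-- A `(K,F,Z,S)` placement delivery array: an `F × K` array whose entries are either `*`
(encoded as `none`) or integers in `[1:S]` (encoded as `some s` with `s : Fin S`). -/
def IsPDA (K F Z S : ℕ) (P : Fin F → Fin K → Option (Fin S)) : Prop :=
  (∀ k : Fin K, (Finset.univ.filter fun j : Fin F => P j k = none).card = Z) ∧
  (∀ s : Fin S, ∃ (j : Fin F) (k : Fin K), P j k = some s) ∧
  (∀ (j1 j2 : Fin F) (k1 k2 : Fin K) (s : Fin S),
      P j1 k1 = some s → P j2 k2 = some s → (j1, k1) ≠ (j2, k2) →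
      P j1 k2 = none ∧ P j2 k1 = none)

/-- A PDA is `g`-regular if each integer appears exactly `g` times. -/
def PDARegular (K F S g : ℕ) (P : Fin F → Fin K → Option (Fin S)) : Prop :=
  ∀ s : Fin S,
    (Finset.univ.filter fun jk : Fin F × Fin K => P jk.1 jk.2 = some s).card = g

/-- Row `i` is a star row for the integer `s`. -/
def PDAStarRow (K F S : ℕ) (P : Fin F → Fin K → Option (Fin S)) (i : Fin F) (s : Fin S) : Prop :=
  ∀ (j : Fin F) (k : Fin K), P j k = some s → P i k = none

/-- Condition 1 with parameter `lam`. -/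
def PDACondition1 (K F Z S lam : ℕ) (P : Fin F → Fin K → Option (Fin S)) : Prop :=
  lam ∣ F ∧ lam ∣ Z ∧
  (∀ (j : Fin F) (k : Fin K),
      P j k = none ↔
        P ⟨j.val % (F / lam), Nat.lt_of_le_of_lt (Nat.mod_le _ _) j.isLt⟩ k = none) ∧
  ∃ φ : Fin S → Fin (F / lam),
    (∀ s : Fin S, PDAStarRow K F S P (Fin.castLE (Nat.div_le_self F lam) (φ s)) s) ∧
    (∀ j : Fin (F / lam), (Finset.univ.filter fun s : Fin S => φ s = j).card * F = lam * S)

/-- Condition 2: every row contains the same number of stars. -/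
def PDACondition2 (K F S : ℕ) (P : Fin F → Fin K → Option (Fin S)) : Prop :=
  ∀ j1 j2 : Fin F,
    (Finset.univ.filter fun k : Fin K => P j1 k = none).card =
    (Finset.univ.filter fun k : Fin K => P j2 k = none).card

/-- The 0-based value `g·(s-1) + <η+i-1>_g` of Construction (10), where in 0-based form
`<η+i-1>_g - 1 = (c + J/F1) % g` with `c` the number of earlier columns containing `s`. -/
def mkVal (g S1 : ℕ) (hg : 0 < g) (s : Fin S1) (x : ℕ) : Fin (g * S1) :=
  ⟨g * s.val + x % g, by
    have h1 : x % g < g := Nat.mod_lt _ hg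
    have h2 : s.val + 1 ≤ S1 := s.isLt
    calc g * s.val + x % g < g * s.val + g := by omega
      _ = g * (s.val + 1) := by ring
      _ ≤ g * S1 := Nat.mul_le_mul (le_refl g) h2⟩

open Finset

private lemma card_mod_aux (m n : ℕ) (hn : 0 < n) (p : Fin n → Prop) [DecidablePred p] :
    (univ.filter fun J : Fin (m * n) => p ⟨J.val % n, Nat.mod_lt _ hn⟩).card
      = m * (univ.filter p).card := by
  rw [show m * (univ.filter p).card = ((univ : Finset (Fin m)) ×ˢ (univ.filter p)).card by
    rw [Finset.card_product, Finset.card_univ, Fintype.card_fin]]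
  refine Finset.card_nbij'
    (i := fun J : Fin (m * n) =>
      ((⟨J.val / n, (Nat.div_lt_iff_lt_mul hn).mpr J.isLt⟩ : Fin m),
       (⟨J.val % n, Nat.mod_lt _ hn⟩ : Fin n)))
    (j := fun q : Fin m × Fin n => (⟨q.2.val + n * q.1.val, by
      have h1 : q.1.val < m := q.1.isLt
      have h2 : q.2.val < n := q.2.isLt
      calc q.2.val + n * q.1.val < n + n * q.1.val := by omega
        _ = n * (q.1.val + 1) := by ring
        _ ≤ n * m := Nat.mul_le_mul_left n h1
        _ = m * n := Nat.mul_comm n m⟩ : Fin (m * n)))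
    ?_ ?_ ?_ ?_
  · intro J hJ
    simp only [Finset.mem_coe, Finset.mem_product, Finset.mem_univ, true_and, Finset.mem_filter] at *
    exact hJ
  · intro q hq
    simp only [Finset.mem_coe, Finset.mem_product, Finset.mem_univ, true_and, Finset.mem_filter] at *
    have h1 : (q.2.val + n * q.1.val) % n = q.2.val := by
      rw [Nat.add_mul_mod_self_left, Nat.mod_eq_of_lt q.2.isLt]
    have h2 : (⟨(q.2.val + n * q.1.val) % n, Nat.mod_lt _ hn⟩ : Fin n) = q.2 := Fin.ext h1
    rw [h2]; exact hq
  · intro J hJ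
    apply Fin.ext
    exact Nat.mod_add_div J.val n
  · intro q hq
    apply Prod.ext
    · apply Fin.ext
      show (q.2.val + n * q.1.val) / n = q.1.val
      rw [Nat.add_mul_div_left _ _ hn, Nat.div_eq_of_lt q.2.isLt, Nat.zero_add]
    · apply Fin.ext
      show (q.2.val + n * q.1.val) % n = q.2.val
      rw [Nat.add_mul_mod_self_left, Nat.mod_eq_of_lt q.2.isLt]

private lemma aux_mod_cases (g a : ℕ) (hg : 0 < g) (h : a < 2 * g) :
    a % g = a ∧ a < g ∨ a % g = a - g ∧ g ≤ a := by
  rcases Nat.lt_or_ge a g with h' | h'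
  · exact Or.inl ⟨Nat.mod_eq_of_lt h', h'⟩
  · exact Or.inr ⟨by rw [Nat.mod_eq_sub_mod h', Nat.mod_eq_of_lt (by omega)], h'⟩

private lemma aux_ne (g c i r : ℕ) (hg : 2 ≤ g) (hc : c < g) (hi : i < g - 1)
    (h : (c + i) % g = r) : c ≠ (r + 1) % g := by
  intro hce
  have hr : r < g := h ▸ Nat.mod_lt _ (by omega)
  rw [hce, Nat.mod_add_mod] at h
  rcases aux_mod_cases g (r + 1 + i) (by omega) (by omega) with ⟨h1, h2⟩ | ⟨h1, h2⟩ <;> omega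

private lemma aux_i0 (g c r : ℕ) (hg : 2 ≤ g) (hc : c < g) (hr : r < g)
    (hne : c ≠ (r + 1) % g) :
    (r + g - c) % g < g - 1 ∧ (c + (r + g - c) % g) % g = r := by
  constructor
  · have hlt : (r + g - c) % g < g := Nat.mod_lt _ (by omega)
    rcases aux_mod_cases g (r + g - c) (by omega) (by omega) with ⟨h1, h2⟩ | ⟨h1, h2⟩
    · by_contra hcon
      have hcc : c = r + 1 := by omega
      exact hne (by rw [hcc, Nat.mod_eq_of_lt (by omega)])
    · by_contra hcon
      have hc0 : c = 0 ∧ r = g - 1 := by omega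
      apply hne
      rw [hc0.1, hc0.2, show g - 1 + 1 = g from by omega, Nat.mod_self]
  · have h3 : (c + (r + g - c) % g) % g = (c + (r + g - c)) % g := Nat.add_mod_mod _ _ _
    rw [h3, show c + (r + g - c) = r + g from by omega, Nat.add_mod_right,
      Nat.mod_eq_of_lt hr]

private lemma aux_cancel (g c i1 i2 : ℕ) (hg : 0 < g) (h : (c + i1) % g = (c + i2) % g)
    (h1 : i1 < g) (h2 : i2 < g) : i1 = i2 := by
  have := Nat.ModEq.add_left_cancel' c h
  rwa [Nat.ModEq, Nat.mod_eq_of_lt h1, Nat.mod_eq_of_lt h2] at this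

private lemma aux_inv (g c i : ℕ) (hg : 0 < g) (hc : c < g) (hi : i < g) :
    ((c + i) % g + g - c) % g = i := by
  rcases aux_mod_cases g (c + i) hg (by omega) with ⟨h1, h2⟩ | ⟨h1, h2⟩
  · rw [h1, show c + i + g - c = i + g from by omega, Nat.add_mod_right, Nat.mod_eq_of_lt hi]
  · rw [h1, show c + i - g + g - c = i from by omega, Nat.mod_eq_of_lt hi]
/-- Proposition 5: from a `g`-regular `(K1,F1,Z1,S1)` PDA `P` satisfying
Condition 2, the array `P1` of size `(g-1)F1 × K1` defined by (in 0-based form)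
`P1(J,k) = *` if `P(J % F1, k) = *`, and `P1(J,k) = g(s-1) + <η+i-1>_g` if
`P(J % F1, k) = s`, where `η-1` counts the cells containing `s` in earlier columns and
`i-1 = J / F1`, is a `(g-1)`-regular `(K1,(g-1)F1,(g-1)Z1,gS1)` PDA satisfying Condition 1
with parameter `λ = g-1`. -/
theorem proP1k (K1 F1 Z1 S1 g : ℕ)
    (hK1 : 0 < K1) (hF1 : 0 < F1) (hZ1 : 0 < Z1) (hS1 : 0 < S1)
    (hg : 2 ≤ g) (hgdef : g * S1 = K1 * (F1 - Z1)) (hZF : Z1 < F1)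
    (P : Fin F1 → Fin K1 → Option (Fin S1))
    (hPDA : IsPDA K1 F1 Z1 S1 P) (hreg : PDARegular K1 F1 S1 g P)
    (hc2 : PDACondition2 K1 F1 S1 P)
    (P1 : Fin ((g - 1) * F1) → Fin K1 → Option (Fin (g * S1)))
    (hP1 : ∀ (J : Fin ((g - 1) * F1)) (k : Fin K1),
      (P ⟨J.val % F1, Nat.mod_lt _ hF1⟩ k = none → P1 J k = none) ∧
      (∀ s : Fin S1, P ⟨J.val % F1, Nat.mod_lt _ hF1⟩ k = some s →
        P1 J k = some (mkVal g S1 (by omega) s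
          ((Finset.univ.filter fun jk : Fin F1 × Fin K1 =>
              P jk.1 jk.2 = some s ∧ jk.2 < k).card + J.val / F1)))) :
    IsPDA K1 ((g - 1) * F1) ((g - 1) * Z1) (g * S1) P1 ∧
    PDARegular K1 ((g - 1) * F1) (g * S1) (g - 1) P1 ∧
    PDACondition1 K1 ((g - 1) * F1) ((g - 1) * Z1) (g * S1) (g - 1) P1 := by
  classical
  obtain ⟨hC1, hC2, hC3⟩ := hPDA
  have hgpos : 0 < g := by omega
  have hg1 : 0 < g - 1 := by omega
  have hF1le : F1 ≤ (g - 1) * F1 := Nat.le_mul_of_pos_left _ hg1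
  have hgF : 0 < (g - 1) * F1 := Nat.mul_pos hg1 hF1
  have hsv : ∀ t : Fin (g * S1), t.val / g < S1 :=
    fun t => Nat.div_lt_of_lt_mul t.isLt
  have hJdivlt : ∀ J : Fin ((g - 1) * F1), J.val / F1 < g - 1 :=
    fun J => (Nat.div_lt_iff_lt_mul hF1).mpr J.isLt
  set T : Fin S1 → Finset (Fin F1 × Fin K1) :=
    fun s => Finset.univ.filter fun jk => P jk.1 jk.2 = some s with hT
  have hTmem : ∀ (s : Fin S1) (jk : Fin F1 × Fin K1), jk ∈ T s ↔ P jk.1 jk.2 = some s := by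
    intro s jk; simp [hT]
  have hTcard : ∀ s, (T s).card = g := hreg
  set c : Fin S1 → Fin K1 → ℕ :=
    fun s k => ((T s).filter fun jk => jk.2 < k).card with hc
  have hcform : ∀ (s : Fin S1) (k : Fin K1),
      (Finset.univ.filter fun jk : Fin F1 × Fin K1 =>
        P jk.1 jk.2 = some s ∧ jk.2 < k).card = c s k := by
    intro s k
    rw [hc]
    simp only [hT, Finset.filter_filter]
  -- distinct columns among cells of s
  have hcol : ∀ (s : Fin S1), ∀ jk ∈ T s, ∀ jk' ∈ T s, jk.2 = jk'.2 → jk = jk' := by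
    intro s jk h1 jk' h2 hk
    by_contra hne
    have hne' : (jk.1, jk.2) ≠ (jk'.1, jk'.2) := by
      simpa using hne
    have hthis := (hC3 jk.1 jk'.1 jk.2 jk'.2 s ((hTmem s jk).1 h1) ((hTmem s jk').1 h2) hne').2
    rw [hk, (hTmem s jk').1 h2] at hthis
    simp at hthis
  -- distinct rows among cells of s
  have hrow : ∀ (s : Fin S1), ∀ jk ∈ T s, ∀ jk' ∈ T s, jk.1 = jk'.1 → jk = jk' := by
    intro s jk h1 jk' h2 hj
    by_contra hne
    have hne' : (jk.1, jk.2) ≠ (jk'.1, jk'.2) := by simpa using hne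
    have hthis := (hC3 jk.1 jk'.1 jk.2 jk'.2 s ((hTmem s jk).1 h1) ((hTmem s jk').1 h2) hne').1
    rw [hj, (hTmem s jk').1 h2] at hthis
    simp at hthis
  have hcmono : ∀ (s : Fin S1), ∀ jk ∈ T s, ∀ jk' ∈ T s, jk.2 < jk'.2 → c s jk.2 < c s jk'.2 := by
    intro s jk h1 jk' h2 hlt
    apply Finset.card_lt_card
    rw [Finset.ssubset_iff_of_subset]
    · exact ⟨jk, Finset.mem_filter.mpr ⟨h1, hlt⟩, fun hmem =>
        absurd (Finset.mem_filter.mp hmem).2 (lt_irrefl _)⟩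
    · intro x hx
      have := Finset.mem_filter.mp hx
      exact Finset.mem_filter.mpr ⟨this.1, lt_trans this.2 hlt⟩
  have hclt : ∀ (s : Fin S1), ∀ jk ∈ T s, c s jk.2 < g := by
    intro s jk h1
    have : ((T s).filter fun x => x.2 < jk.2) ⊂ T s := by
      rw [Finset.ssubset_iff_of_subset (Finset.filter_subset _ _)]
      exact ⟨jk, h1, fun hmem => absurd (Finset.mem_filter.mp hmem).2 (lt_irrefl _)⟩
    have := Finset.card_lt_card this
    rwa [hTcard] at this
  have hcinj : ∀ (s : Fin S1), ∀ jk ∈ T s, ∀ jk' ∈ T s, c s jk.2 = c s jk'.2 → jk = jk' := by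
    intro s jk h1 jk' h2 hce
    rcases lt_trichotomy jk.2 jk'.2 with h | h | h
    · exact absurd hce (Nat.ne_of_lt (hcmono s jk h1 jk' h2 h))
    · exact hcol s jk h1 jk' h2 h
    · exact absurd hce.symm (Nat.ne_of_lt (hcmono s jk' h2 jk h1 h))
  have hcsurj : ∀ (s : Fin S1), ∀ r < g, ∃ jk, jk ∈ T s ∧ c s jk.2 = r := by
    intro s r hr
    have himg : (T s).image (fun jk => c s jk.2) = Finset.range g := by
      apply Finset.eq_of_subset_of_card_le
      · intro x hx
        simp only [Finset.mem_image] at hx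
        obtain ⟨jk, hjk, hjke⟩ := hx
        exact Finset.mem_range.mpr (hjke ▸ hclt s jk hjk)
      · rw [Finset.card_range, Finset.card_image_of_injOn, hTcard]
        intro a ha b hb hab
        exact hcinj s a ha b hb hab
    have : r ∈ (T s).image (fun jk => c s jk.2) := himg ▸ Finset.mem_range.mpr hr
    simpa [Finset.mem_image] using this
  -- decoding P1 values
  have hnone : ∀ (J : Fin ((g - 1) * F1)) (k : Fin K1),
      P1 J k = none ↔ P ⟨J.val % F1, Nat.mod_lt _ hF1⟩ k = none := by
    intro J k
    constructor
    · intro h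
      rcases h' : P ⟨J.val % F1, Nat.mod_lt _ hF1⟩ k with _ | s
      · rfl
      · rw [(hP1 J k).2 s h'] at h; simp at h
    · exact (hP1 J k).1
  have hdec : ∀ (J : Fin ((g - 1) * F1)) (k : Fin K1) (t : Fin (g * S1)), P1 J k = some t →
      ∃ s : Fin S1, P ⟨J.val % F1, Nat.mod_lt _ hF1⟩ k = some s ∧
        t.val = g * s.val + (c s k + J.val / F1) % g := by
    intro J k t ht
    rcases h' : P ⟨J.val % F1, Nat.mod_lt _ hF1⟩ k with _ | s
    · rw [(hP1 J k).1 h'] at ht; simp at ht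
    · refine ⟨s, rfl, ?_⟩
      have h2 := (hP1 J k).2 s h'
      rw [ht] at h2
      have h3 := Option.some.inj h2
      rw [h3, ← hcform s k]
      rfl
  -- Column star count for P1
  have hP1C1 : ∀ k : Fin K1,
      (Finset.univ.filter fun J : Fin ((g - 1) * F1) => P1 J k = none).card = (g - 1) * Z1 := by
    intro k
    have he : (Finset.univ.filter fun J : Fin ((g - 1) * F1) => P1 J k = none)
        = Finset.univ.filter fun J : Fin ((g - 1) * F1) =>
            P ⟨J.val % F1, Nat.mod_lt _ hF1⟩ k = none := by
      apply Finset.filter_congr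
      intro J _
      simp only [hnone J k]
    rw [he, card_mod_aux (g - 1) F1 hF1 (fun j => P j k = none), hC1 k]
  -- every value occurs in P1
  have hP1C2 : ∀ t : Fin (g * S1), ∃ (J : Fin ((g - 1) * F1)) (k : Fin K1), P1 J k = some t := by
    intro t
    obtain ⟨jk, hjk, hjkc⟩ := hcsurj ⟨t.val / g, hsv t⟩ (t.val % g) (Nat.mod_lt _ hgpos)
    refine ⟨⟨jk.1.val, lt_of_lt_of_le jk.1.isLt hF1le⟩, jk.2, ?_⟩
    have hidx : (⟨(⟨jk.1.val, lt_of_lt_of_le jk.1.isLt hF1le⟩ : Fin ((g - 1) * F1)).val % F1,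
        Nat.mod_lt _ hF1⟩ : Fin F1) = jk.1 := Fin.ext (Nat.mod_eq_of_lt jk.1.isLt)
    have h1 := (hP1 ⟨jk.1.val, lt_of_lt_of_le jk.1.isLt hF1le⟩ jk.2).2 ⟨t.val / g, hsv t⟩
      (by rw [hidx]; exact (hTmem _ jk).1 hjk)
    rw [h1]
    congr 1
    apply Fin.ext
    show g * (t.val / g) + ((Finset.univ.filter fun jk' : Fin F1 × Fin K1 =>
        P jk'.1 jk'.2 = some (⟨t.val / g, hsv t⟩ : Fin S1) ∧ jk'.2 < jk.2).card
        + (⟨jk.1.val, lt_of_lt_of_le jk.1.isLt hF1le⟩ : Fin ((g - 1) * F1)).val / F1) % g = t.val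
    rw [hcform, hjkc]
    have hdiv0 : (⟨jk.1.val, lt_of_lt_of_le jk.1.isLt hF1le⟩ : Fin ((g - 1) * F1)).val / F1 = 0 :=
      Nat.div_eq_of_lt jk.1.isLt
    rw [hdiv0, Nat.add_zero, Nat.mod_eq_of_lt (Nat.mod_lt _ hgpos), Nat.div_add_mod]
  -- C3 for P1
  have hP1C3 : ∀ (J1 J2 : Fin ((g - 1) * F1)) (k1 k2 : Fin K1) (t : Fin (g * S1)),
      P1 J1 k1 = some t → P1 J2 k2 = some t → (J1, k1) ≠ (J2, k2) →
      P1 J1 k2 = none ∧ P1 J2 k1 = none := by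
    intro J1 J2 k1 k2 t h1 h2 hne
    obtain ⟨s1, hs1, ht1⟩ := hdec J1 k1 t h1
    obtain ⟨s2, hs2, ht2⟩ := hdec J2 k2 t h2
    have hseq : s1 = s2 := by
      apply Fin.ext
      have e1 : s1.val = t.val / g := by
        rw [ht1, Nat.mul_add_div hgpos, Nat.div_eq_of_lt (Nat.mod_lt _ hgpos), Nat.add_zero]
      have e2 : s2.val = t.val / g := by
        rw [ht2, Nat.mul_add_div hgpos, Nat.div_eq_of_lt (Nat.mod_lt _ hgpos), Nat.add_zero]
      rw [e1, e2]
    subst hseq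
    by_cases hk : k1 = k2
    · subst hk
      exfalso
      have m1 : ((⟨J1.val % F1, Nat.mod_lt _ hF1⟩ : Fin F1), k1) ∈ T s1 := (hTmem _ _).2 hs1
      have m2 : ((⟨J2.val % F1, Nat.mod_lt _ hF1⟩ : Fin F1), k1) ∈ T s1 := (hTmem _ _).2 hs2
      have hjeq := hcol s1 _ m1 _ m2 rfl
      have hmodeq : J1.val % F1 = J2.val % F1 := by
        have := congrArg (fun p => (Prod.fst p).val) hjeq
        simpa using this
      have hxeq : (c s1 k1 + J1.val / F1) % g = (c s1 k1 + J2.val / F1) % g := by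
        have := ht1.symm.trans ht2
        omega
      have hieq : J1.val / F1 = J2.val / F1 :=
        aux_cancel g _ _ _ hgpos hxeq (lt_trans (hJdivlt J1) (by omega))
          (lt_trans (hJdivlt J2) (by omega))
      have : J1 = J2 := by
        apply Fin.ext
        have d1 := Nat.div_add_mod J1.val F1
        have d2 := Nat.div_add_mod J2.val F1
        rw [← d1, ← d2, hieq, hmodeq]
      exact hne (by rw [this])
    · have hcells : ((⟨J1.val % F1, Nat.mod_lt _ hF1⟩ : Fin F1), k1)
          ≠ ((⟨J2.val % F1, Nat.mod_lt _ hF1⟩ : Fin F1), k2) := by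
        intro h
        exact hk (congrArg Prod.snd h)
      have := hC3 _ _ _ _ s1 hs1 hs2 hcells
      exact ⟨(hP1 J1 k2).1 this.1, (hP1 J2 k1).1 this.2⟩
  -- regularity of P1
  have hP1reg : ∀ t : Fin (g * S1),
      (Finset.univ.filter fun Jk : Fin ((g - 1) * F1) × Fin K1 =>
        P1 Jk.1 Jk.2 = some t).card = g - 1 := by
    intro t
    set s : Fin S1 := ⟨t.val / g, hsv t⟩ with hsdef
    set r : ℕ := t.val % g with hrdef
    have hr : r < g := Nat.mod_lt _ hgpos
    obtain ⟨jk0, hjk0, hjk0c⟩ := hcsurj s ((r + 1) % g) (Nat.mod_lt _ hgpos)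
    -- key decode facts
    have hkey : ∀ Jk : Fin ((g - 1) * F1) × Fin K1, P1 Jk.1 Jk.2 = some t →
        ((⟨Jk.1.val % F1, Nat.mod_lt _ hF1⟩ : Fin F1), Jk.2) ∈ T s ∧
          (c s Jk.2 + Jk.1.val / F1) % g = r ∧ c s Jk.2 ≠ (r + 1) % g := by
      intro Jk hJk
      obtain ⟨s', hs', ht'⟩ := hdec Jk.1 Jk.2 t hJk
      have hseq : s' = s := by
        apply Fin.ext
        rw [hsdef]
        show s'.val = t.val / g
        rw [ht', Nat.mul_add_div hgpos, Nat.div_eq_of_lt (Nat.mod_lt _ hgpos), Nat.add_zero]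
      subst hseq
      have hmem : ((⟨Jk.1.val % F1, Nat.mod_lt _ hF1⟩ : Fin F1), Jk.2) ∈ T s := (hTmem _ _).2 hs'
      have hmodr : (c s Jk.2 + Jk.1.val / F1) % g = r := by
        rw [hrdef, ht', Nat.mul_add_mod, Nat.mod_eq_of_lt (Nat.mod_lt _ hgpos)]
      exact ⟨hmem, hmodr, aux_ne g _ _ r hg (hclt s _ hmem) (hJdivlt Jk.1) hmodr⟩
    have hcount : (Finset.univ.filter fun Jk : Fin ((g - 1) * F1) × Fin K1 =>
        P1 Jk.1 Jk.2 = some t).card = ((T s).erase jk0).card := by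
      apply Finset.card_nbij'
       (i := fun Jk : Fin ((g - 1) * F1) × Fin K1 =>
         ((⟨Jk.1.val % F1, Nat.mod_lt _ hF1⟩ : Fin F1), Jk.2))
       (j := fun jk : Fin F1 × Fin K1 =>
         ((⟨(jk.1.val + F1 * ((r + g - c s jk.2) % g)) % ((g - 1) * F1),
             Nat.mod_lt _ hgF⟩ : Fin ((g - 1) * F1)), jk.2))
      · -- forward membership
       intro Jk hJk
       obtain ⟨hmem, hmodr, hne⟩ := hkey Jk (Finset.mem_filter.mp hJk).2
       refine Finset.mem_erase.mpr ⟨?_, hmem⟩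
       intro heq
       apply hne
       rw [← hjk0c, ← heq]
      · -- backward membership
       intro jk hjk
       obtain ⟨hjkne, hjkT⟩ := Finset.mem_erase.mp hjk
       have hcne : c s jk.2 ≠ (r + 1) % g := by
         intro heq
         exact hjkne (hcinj s jk hjkT jk0 hjk0 (heq.trans hjk0c.symm))
       obtain ⟨hi0lt, hi0mod⟩ := aux_i0 g (c s jk.2) r hg (hclt s jk hjkT) hr hcne
       set i0 : ℕ := (r + g - c s jk.2) % g with hi0def
       have hv : jk.1.val + F1 * i0 < (g - 1) * F1 := by
         have h1 : jk.1.val < F1 := jk.1.isLt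
         calc jk.1.val + F1 * i0 < F1 + F1 * i0 := by omega
           _ = F1 * (i0 + 1) := by ring
           _ ≤ F1 * (g - 1) := Nat.mul_le_mul_left F1 hi0lt
           _ = (g - 1) * F1 := Nat.mul_comm _ _
       have hvm : (jk.1.val + F1 * i0) % ((g - 1) * F1) = jk.1.val + F1 * i0 :=
         Nat.mod_eq_of_lt hv
       have hvmod : (jk.1.val + F1 * i0) % F1 = jk.1.val := by
         rw [Nat.add_mul_mod_self_left, Nat.mod_eq_of_lt jk.1.isLt]
       have hvdiv : (jk.1.val + F1 * i0) / F1 = i0 := by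
         rw [Nat.add_mul_div_left _ _ hF1, Nat.div_eq_of_lt jk.1.isLt, Nat.zero_add]
       refine Finset.mem_filter.mpr ⟨Finset.mem_univ _, ?_⟩
       have hidx : (⟨(⟨(jk.1.val + F1 * i0) % ((g - 1) * F1), Nat.mod_lt _ hgF⟩ :
           Fin ((g - 1) * F1)).val % F1, Nat.mod_lt _ hF1⟩ : Fin F1) = jk.1 := by
         apply Fin.ext
         show ((jk.1.val + F1 * i0) % ((g - 1) * F1)) % F1 = jk.1.val
         rw [hvm, hvmod]
       have h1 := (hP1 ⟨(jk.1.val + F1 * i0) % ((g - 1) * F1), Nat.mod_lt _ hgF⟩ jk.2).2 s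
         (by rw [hidx]; exact (hTmem s jk).1 hjkT)
       rw [h1]
       congr 1
       apply Fin.ext
       show g * s.val + ((Finset.univ.filter fun jk' : Fin F1 × Fin K1 =>
           P jk'.1 jk'.2 = some s ∧ jk'.2 < jk.2).card
           + (⟨(jk.1.val + F1 * i0) % ((g - 1) * F1), Nat.mod_lt _ hgF⟩ :
             Fin ((g - 1) * F1)).val / F1) % g = t.val
       rw [hcform]
       have hval : (⟨(jk.1.val + F1 * i0) % ((g - 1) * F1), Nat.mod_lt _ hgF⟩ :
           Fin ((g - 1) * F1)).val / F1 = i0 := by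
         show ((jk.1.val + F1 * i0) % ((g - 1) * F1)) / F1 = i0
         rw [hvm, hvdiv]
       rw [hval, hi0mod]
       show g * (t.val / g) + t.val % g = t.val
       exact Nat.div_add_mod t.val g
      · -- left inverse
       intro Jk hJk
       obtain ⟨hmem, hmodr, hne⟩ := hkey Jk (Finset.mem_filter.mp hJk).2
       have hi0 : (r + g - c s Jk.2) % g = Jk.1.val / F1 := by
         rw [← hmodr]
         exact aux_inv g (c s Jk.2) (Jk.1.val / F1) hgpos (hclt s _ hmem)
           (lt_trans (hJdivlt Jk.1) (by omega))
       apply Prod.ext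
       · apply Fin.ext
         show (Jk.1.val % F1 + F1 * ((r + g - c s Jk.2) % g)) % ((g - 1) * F1) = Jk.1.val
         rw [hi0, Nat.mod_add_div, Nat.mod_eq_of_lt Jk.1.isLt]
       · rfl
      · -- right inverse
       intro jk hjk
       obtain ⟨hjkne, hjkT⟩ := Finset.mem_erase.mp hjk
       have hcne : c s jk.2 ≠ (r + 1) % g := by
         intro heq
         exact hjkne (hcinj s jk hjkT jk0 hjk0 (heq.trans hjk0c.symm))
       obtain ⟨hi0lt, hi0mod⟩ := aux_i0 g (c s jk.2) r hg (hclt s jk hjkT) hr hcne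
       set i0 : ℕ := (r + g - c s jk.2) % g with hi0def
       have hv : jk.1.val + F1 * i0 < (g - 1) * F1 := by
         have h1 : jk.1.val < F1 := jk.1.isLt
         calc jk.1.val + F1 * i0 < F1 + F1 * i0 := by omega
           _ = F1 * (i0 + 1) := by ring
           _ ≤ F1 * (g - 1) := Nat.mul_le_mul_left F1 hi0lt
           _ = (g - 1) * F1 := Nat.mul_comm _ _
       apply Prod.ext
       · apply Fin.ext
         show ((jk.1.val + F1 * i0) % ((g - 1) * F1)) % F1 = jk.1.val
         rw [Nat.mod_eq_of_lt hv, Nat.add_mul_mod_self_left, Nat.mod_eq_of_lt jk.1.isLt]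
       · rfl
    rw [hcount, Finset.card_erase_of_mem hjk0, hTcard]
  -- final assembly
  have hF' : (g - 1) * F1 / (g - 1) = F1 := Nat.mul_div_cancel_left F1 hg1
  refine ⟨⟨hP1C1, hP1C2, hP1C3⟩, hP1reg, dvd_mul_right _ _, dvd_mul_right _ _, ?_, ?_⟩
  · -- star structure repeats mod F1
    intro J k
    rw [hnone J k, hnone _ k]
    have hidx : (⟨(⟨J.val % ((g - 1) * F1 / (g - 1)),
          Nat.lt_of_le_of_lt (Nat.mod_le _ _) J.isLt⟩ : Fin ((g - 1) * F1)).val % F1,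
          Nat.mod_lt _ hF1⟩ : Fin F1) = ⟨J.val % F1, Nat.mod_lt _ hF1⟩ := by
      apply Fin.ext
      show (J.val % ((g - 1) * F1 / (g - 1))) % F1 = J.val % F1
      rw [hF', Nat.mod_eq_of_lt (Nat.mod_lt _ hF1)]
    rw [hidx]
  · -- the map φ
    have hchoice : ∀ t : Fin (g * S1), ∃ jk : Fin F1 × Fin K1,
        jk ∈ T ⟨t.val / g, hsv t⟩ ∧ c ⟨t.val / g, hsv t⟩ jk.2 = (t.val % g + 1) % g :=
      fun t => hcsurj _ _ (Nat.mod_lt _ hgpos)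
    choose cell hcellT hcellc using hchoice
    have hback : ∀ (k : Fin K1) (j' : Fin F1) (s' : Fin S1), P j' k = some s' →
        cell (mkVal g S1 hgpos s' (c s' k + (g - 1))) = (j', k) := by
      intro k j' s' hks
      set t0 : Fin (g * S1) := mkVal g S1 hgpos s' (c s' k + (g - 1)) with ht0
      have hdiv : t0.val / g = s'.val := by
        show (g * s'.val + (c s' k + (g - 1)) % g) / g = s'.val
        rw [Nat.mul_add_div hgpos, Nat.div_eq_of_lt (Nat.mod_lt _ hgpos), Nat.add_zero]
      have hmod : t0.val % g = (c s' k + (g - 1)) % g := by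
        show (g * s'.val + (c s' k + (g - 1)) % g) % g = _
        rw [Nat.mul_add_mod, Nat.mod_eq_of_lt (Nat.mod_lt _ hgpos)]
      have hseq : (⟨t0.val / g, hsv t0⟩ : Fin S1) = s' := Fin.ext hdiv
      have hkT : ((j', k) : Fin F1 × Fin K1) ∈ T s' := (hTmem _ _).2 hks
      have hcT := hcellT t0
      have hcc := hcellc t0
      rw [hseq] at hcT hcc
      have hr0 : (t0.val % g + 1) % g = c s' k := by
        rw [hmod, Nat.mod_add_mod, show c s' k + (g - 1) + 1 = c s' k + g from by omega,
          Nat.add_mod_right, Nat.mod_eq_of_lt (hclt s' _ hkT)]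
      exact hcinj s' (cell t0) hcT (j', k) hkT (by rw [hcc, hr0])
    refine ⟨fun t => ⟨(cell t).1.val, by rw [hF']; exact (cell t).1.isLt⟩, ?_, ?_⟩
    · -- star row property
      intro t J k hJk
      obtain ⟨s', hs', ht'⟩ := hdec J k t hJk
      have hseq : s' = (⟨t.val / g, hsv t⟩ : Fin S1) := by
        apply Fin.ext
        show s'.val = t.val / g
        rw [ht', Nat.mul_add_div hgpos, Nat.div_eq_of_lt (Nat.mod_lt _ hgpos), Nat.add_zero]
      have hmodr : (c s' k + J.val / F1) % g = t.val % g := by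
        rw [ht', Nat.mul_add_mod, Nat.mod_eq_of_lt (Nat.mod_lt _ hgpos)]
      have hmem : ((⟨J.val % F1, Nat.mod_lt _ hF1⟩ : Fin F1), k) ∈ T s' := (hTmem _ _).2 hs'
      have hcne : c s' k ≠ (t.val % g + 1) % g :=
        aux_ne g _ _ _ hg (hclt s' _ hmem) (hJdivlt J) hmodr
      have hcT := hcellT t
      have hcc := hcellc t
      rw [← hseq] at hcT hcc
      have hne : ((cell t).1, (cell t).2) ≠ ((⟨J.val % F1, Nat.mod_lt _ hF1⟩ : Fin F1), k) := by
        intro heq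
        apply hcne
        have hk2 : (cell t).2 = k := congrArg Prod.snd heq
        rw [← hk2, hcc]
      have hstar := (hC3 (cell t).1 _ (cell t).2 k s' ((hTmem _ _).1 hcT) hs' hne).1
      apply (hP1 _ k).1
      have hidx2 : (⟨(Fin.castLE (Nat.div_le_self ((g - 1) * F1) (g - 1))
          (⟨(cell t).1.val, by rw [hF']; exact (cell t).1.isLt⟩ : Fin ((g - 1) * F1 / (g - 1)))).val % F1,
          Nat.mod_lt _ hF1⟩ : Fin F1) = (cell t).1 := by
        apply Fin.ext
        show (cell t).1.val % F1 = (cell t).1.val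
        exact Nat.mod_eq_of_lt (cell t).1.isLt
      exact (congrArg (fun x => P x k) hidx2).trans hstar
    · -- fiber sizes
      intro j
      have hjlt : j.val < F1 := lt_of_lt_of_le j.isLt (le_of_eq hF')
      set j' : Fin F1 := ⟨j.val, hjlt⟩ with hj'def
      set z : ℕ := (Finset.univ.filter fun k : Fin K1 => P j' k = none).card with hz
      have hzle : z ≤ K1 := by
        rw [hz]
        exact le_trans (Finset.card_filter_le _ _) (by simp)
      have hrowsum : F1 * z = K1 * Z1 := by
        have hsum : ∑ jr : Fin F1, (Finset.univ.filter fun k : Fin K1 => P jr k = none).card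
            = ∑ k : Fin K1, (Finset.univ.filter fun jr : Fin F1 => P jr k = none).card := by
          simp only [Finset.card_filter]
          exact Finset.sum_comm
        rw [Finset.sum_congr rfl (fun jr _ => hc2 jr j'),
          Finset.sum_congr rfl (fun k _ => hC1 k)] at hsum
        simpa using hsum
      have hfiber : (Finset.univ.filter fun t : Fin (g * S1) =>
          (⟨(cell t).1.val, by rw [hF']; exact (cell t).1.isLt⟩ : Fin ((g - 1) * F1 / (g - 1))) = j).card
          = (Finset.univ.filter fun k : Fin K1 => ¬ P j' k = none).card := by
        refine Finset.card_nbij' (i := fun t => (cell t).2)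
          (j := fun k => (P j' k).elim (⟨0, Nat.mul_pos hgpos hS1⟩ : Fin (g * S1))
            (fun s' => mkVal g S1 hgpos s' (c s' k + (g - 1)))) ?_ ?_ ?_ ?_
        · intro t ht
          have ht2 := (Finset.mem_filter.mp ht).2
          have hveq : (cell t).1.val = j.val := congrArg Fin.val ht2
          have hj1 : (cell t).1 = j' := Fin.ext hveq
          have hsome : P j' (cell t).2 = some ⟨t.val / g, hsv t⟩ := by
            rw [← hj1]
            exact (hTmem _ _).1 (hcellT t)
          refine Finset.mem_filter.mpr ⟨Finset.mem_univ _, ?_⟩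
          rw [hsome]
          simp
        · intro k hk
          have hk2 := (Finset.mem_filter.mp hk).2
          rcases h' : P j' k with _ | s'
          · exact absurd h' hk2
          · refine Finset.mem_filter.mpr ⟨Finset.mem_univ _, ?_⟩
            beta_reduce
            rw [h']
            show (⟨(cell (mkVal g S1 hgpos s' (c s' k + (g - 1)))).1.val, _⟩ :
              Fin ((g - 1) * F1 / (g - 1))) = j
            apply Fin.ext
            show (cell (mkVal g S1 hgpos s' (c s' k + (g - 1)))).1.val = j.val
            rw [hback k j' s' h']
        · intro t ht
          have ht2 := (Finset.mem_filter.mp ht).2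
          have hveq : (cell t).1.val = j.val := congrArg Fin.val ht2
          have hj1 : (cell t).1 = j' := Fin.ext hveq
          have hsome : P j' (cell t).2 = some ⟨t.val / g, hsv t⟩ := by
            rw [← hj1]
            exact (hTmem _ _).1 (hcellT t)
          beta_reduce
          rw [hsome]
          show mkVal g S1 hgpos ⟨t.val / g, hsv t⟩
            (c ⟨t.val / g, hsv t⟩ (cell t).2 + (g - 1)) = t
          apply Fin.ext
          show g * (t.val / g) + (c ⟨t.val / g, hsv t⟩ (cell t).2 + (g - 1)) % g = t.val
          rw [hcellc t, Nat.mod_add_mod,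
            show t.val % g + 1 + (g - 1) = t.val % g + g from by omega,
            Nat.add_mod_right, Nat.mod_eq_of_lt (Nat.mod_lt _ hgpos), Nat.div_add_mod]
        · intro k hk
          have hk2 := (Finset.mem_filter.mp hk).2
          rcases h' : P j' k with _ | s'
          · exact absurd h' hk2
          · beta_reduce
            rw [h']
            show (cell (mkVal g S1 hgpos s' (c s' k + (g - 1)))).2 = k
            rw [hback k j' s' h']
      rw [hfiber]
      have hnegcard : (Finset.univ.filter fun k : Fin K1 => ¬ P j' k = none).card = K1 - z := by
        have htot := Finset.card_filter_add_card_filter_not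
          (s := (Finset.univ : Finset (Fin K1))) (p := fun k => P j' k = none)
        rw [Finset.card_univ, Fintype.card_fin, ← hz] at htot
        omega
      rw [hnegcard]
      have key : (K1 - z) * F1 = g * S1 := by
        have h1 : (K1 : ℤ) * F1 - z * F1 = g * S1 := by
          have h2 : (g : ℤ) * S1 = K1 * (F1 - Z1) := by
            have := hgdef
            zify [hZF.le] at this
            exact_mod_cast this
          have h3 : (F1 : ℤ) * z = K1 * Z1 := by exact_mod_cast hrowsum
          linarith [h2, h3]
        zify [hzle]
        linarith [h1]
      calc (K1 - z) * ((g - 1) * F1) = (g - 1) * ((K1 - z) * F1) := by ring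
        _ = (g - 1) * (g * S1) := by rw [key]
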